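/- Let H ∈ F₂^{m×n} be (δ,γ)-expanding, let 0 < ε < δγ/2 and 0 < ξ < (δ − 2ε/γ)/2. If v₀, v₁, …, v_ℓ ∈ F₂ⁿ satisfy |H v_i| < εn for all 0 ≤ i ≤ ℓ and |v_i ⊕ v_{i+1}| < ξn for all 0 ≤ i < ℓ, then |v₀ ⊕ v_ℓ| ≤ (2ε/γ)·n. Consequently every ξ-cluster of Ω(ε) has Hamming diameter at most (2ε/γ)·n. -/

import Mathlib

lemma hn_add_le {ι : Type*} [Fintype ι] (x y : ι → ZMod 2) :
    hammingNorm (x + y) ≤ hammingNorm x + hammingNorm y := by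
  calc hammingNorm (x + y) = hammingDist (x + y) 0 := (hammingDist_zero_right _).symm
    _ ≤ hammingDist (x + y) y + hammingDist y 0 := hammingDist_triangle _ _ _
    _ = hammingNorm x + hammingNorm y := by
        rw [hammingDist_eq_hammingNorm, hammingDist_zero_right]; simp
        congr 1; funext k; exact ZMod.neg_eq_self_mod_two _

/-- A binary matrix `H ∈ F₂^{m×n}` is `(δ,γ)`-expanding if every `x ∈ F₂ⁿ`
with Hamming weight `|x| ≤ δn` satisfies `|Hx| ≥ γ|x|`. -/
def IsExpanding {m n : ℕ} (H : Matrix (Fin m) (Fin n) (ZMod 2)) (δ γ : ℝ) : Prop :=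
  ∀ x : Fin n → ZMod 2, (hammingNorm x : ℝ) ≤ δ * n →
    γ * (hammingNorm x : ℝ) ≤ (hammingNorm (H.mulVec x) : ℝ)

/-- let `H` be `(δ,γ)`-expanding, `0 < ε < δγ/2` and
`0 < ξ < (δ − 2ε/γ)/2`. If `v₀, …, v_ℓ` all have energy `|H vᵢ| < εn` and
consecutive members differ in fewer than `ξn` coordinates, then
`|v₀ ⊕ v_ℓ| ≤ (2ε/γ)n`; consequently every ξ-cluster of `Ω(ε)` has Hamming
diameter at most `(2ε/γ)n`. -/
theorem cluster_diameter {m n : ℕ} (H : Matrix (Fin m) (Fin n) (ZMod 2))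
    (δ γ ε ξ : ℝ) (hδ : 0 < δ) (hγ : 0 < γ) (hexp : IsExpanding H δ γ)
    (hε0 : 0 < ε) (hε : ε < δ * γ / 2)
    (hξ0 : 0 < ξ) (hξ : ξ < (δ - 2 * ε / γ) / 2)
    (ℓ : ℕ) (v : ℕ → Fin n → ZMod 2)
    (henergy : ∀ i ≤ ℓ, (hammingNorm (H.mulVec (v i)) : ℝ) < ε * n)
    (hstep : ∀ i < ℓ, (hammingNorm (v i + v (i + 1)) : ℝ) < ξ * n) :
    (hammingNorm (v 0 + v ℓ) : ℝ) ≤ (2 * ε / γ) * n := by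
  have hn0 : (0:ℝ) ≤ n := Nat.cast_nonneg n
  have hself : ∀ w : Fin n → ZMod 2, w + w = 0 := fun w =>
    funext fun k => CharTwo.add_self_eq_zero _
  have hεγ : 0 < 2 * ε / γ := by positivity
  -- key bound: for any i ≤ ℓ with |v0 + v i| ≤ δn, we get the 2ε/γ bound
  have key : ∀ i, i ≤ ℓ → (hammingNorm (v 0 + v i) : ℝ) ≤ δ * n →
      (hammingNorm (v 0 + v i) : ℝ) ≤ (2 * ε / γ) * n := by
    intro i hi hsmall
    have hH : H.mulVec (v 0 + v i) = H.mulVec (v 0) + H.mulVec (v i) :=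
      Matrix.mulVec_add ..
    have h1 : (hammingNorm (H.mulVec (v 0 + v i)) : ℝ) < 2 * ε * n := by
      rw [hH]
      calc (hammingNorm (H.mulVec (v 0) + H.mulVec (v i)) : ℝ)
          ≤ (hammingNorm (H.mulVec (v 0)) : ℝ) + (hammingNorm (H.mulVec (v i)) : ℝ) := by
            exact_mod_cast hn_add_le _ _
        _ < ε * n + ε * n := add_lt_add (henergy 0 (Nat.zero_le _)) (henergy i hi)
        _ = 2 * ε * n := by ring
    have h2 := hexp _ hsmall
    have h3 : γ * (hammingNorm (v 0 + v i) : ℝ) < 2 * ε * n := lt_of_le_of_lt h2 h1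
    rw [div_mul_eq_mul_div, le_div_iff₀ hγ]
    nlinarith
  -- induction
  have main : ∀ i ≤ ℓ, (hammingNorm (v 0 + v i) : ℝ) ≤ (2 * ε / γ) * n := by
    intro i hi
    induction i with
    | zero =>
      rw [hself]
      simp only [hammingNorm_zero, Nat.cast_zero]
      positivity
    | succ j ih =>
      have hj : j ≤ ℓ := Nat.le_of_succ_le hi
      have hjlt : j < ℓ := hi
      have ihj := ih hj
      have hsum : v 0 + v (j+1) = (v 0 + v j) + (v j + v (j+1)) := by
        rw [add_assoc, ← add_assoc (v j), hself, zero_add]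
      have hb : (hammingNorm (v 0 + v (j+1)) : ℝ) ≤
          (hammingNorm (v 0 + v j) : ℝ) + (hammingNorm (v j + v (j+1)) : ℝ) := by
        rw [hsum]; exact_mod_cast hn_add_le _ _
      have hsmall : (hammingNorm (v 0 + v (j+1)) : ℝ) ≤ δ * n := by
        have := hstep j hjlt
        have hb2 : (hammingNorm (v 0 + v (j+1)) : ℝ) < (2*ε/γ) * n + ξ * n := by linarith
        have : (2*ε/γ) + ξ ≤ δ := by nlinarith
        nlinarith
      exact key (j+1) hi hsmall
  exact main ℓ le_rfl
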